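/- Let (φ, G) and (φ', G') be pseudo-curve generators with pseudo-curves PC and PC'. Then H(PC, PC') ≤ sup_{θ ∈ S¹} H(PC^θ, PC'^θ), and moreover sup_{θ ∈ S¹} H(PC^θ, PC'^θ) = d∞((φ,G),(φ',G')), where PC^θ and PC'^θ denote the fibers over θ regarded as subsets of Ω. -/

import Mathlib

open Set Metric Filter Topology

/-- The graph of `φ` over `G`. -/
def graphOn (G : Set UnitAddCircle) (φ : UnitAddCircle → ℝ) : Set (UnitAddCircle × ℝ) :=
  (fun θ => (θ, φ θ)) '' G

lemma graphOn_mem {G : Set UnitAddCircle} {φ : UnitAddCircle → ℝ} {p : UnitAddCircle × ℝ} :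
    p ∈ graphOn G φ ↔ ∃ θ, θ ∈ G ∧ (θ, φ θ) = p := Iff.rfl

/-- Over a point of `G` itself, the fiber of the closure of the graph is a single point. -/
lemma fiber_eq {G : Set UnitAddCircle} {φ : UnitAddCircle → ℝ}
    (hφc : ContinuousOn φ G) {θ₀ : UnitAddCircle} (hθ₀ : θ₀ ∈ G) {y : ℝ}
    (hy : (θ₀, y) ∈ closure (graphOn G φ)) : y = φ θ₀ := by
  obtain ⟨u, hu, hlim⟩ := mem_closure_iff_seq_limit.1 hy
  choose v hvG hvu using fun n => (graphOn_mem.1 (hu n))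
  have hu' : u = fun n => (v n, φ (v n)) := funext fun n => (hvu n).symm
  rw [hu'] at hlim
  have h1 : Tendsto v atTop (𝓝 θ₀) := (continuous_fst.tendsto _).comp hlim
  have h2 : Tendsto (fun n => φ (v n)) atTop (𝓝 y) := (continuous_snd.tendsto _).comp hlim
  have h3 : Tendsto v atTop (𝓝[G] θ₀) :=
    tendsto_nhdsWithin_of_tendsto_nhds_of_eventually_within v h1 (Eventually.of_forall hvG)
  exact tendsto_nhds_unique h2 (Tendsto.comp (hφc θ₀ hθ₀) h3)

/-- Every point of the closure of the graph of `φ` can be matched, in the same fiber,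
by a point of the closure of the graph of `φ'` at vertical distance at most `d`. -/
lemma fiber_approx {a b : ℝ} {G G' : Set UnitAddCircle}
    (hGG' : Dense (G ∩ G'))
    {φ φ' : UnitAddCircle → ℝ} (hφc : ContinuousOn φ G)
    (hφ'I : ∀ θ ∈ G', φ' θ ∈ Icc a b)
    {d : ℝ} (hd : ∀ θ ∈ G ∩ G', |φ θ - φ' θ| ≤ d)
    {θ : UnitAddCircle} {y : ℝ} (hy : (θ, y) ∈ closure (graphOn G φ)) :
    ∃ y', (θ, y') ∈ closure (graphOn G' φ') ∧ y' ∈ Icc a b ∧ |y - y'| ≤ d := by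
  have key : ∀ ε : ℝ, 0 < ε → ∃ x, x ∈ G ∩ G' ∧ dist x θ < ε ∧ |φ x - y| < ε := by
    intro ε hε
    obtain ⟨p, hp, hpd⟩ := Metric.mem_closure_iff.1 hy (ε / 2) (by positivity)
    obtain ⟨θ', hθ'G, rfl⟩ := graphOn_mem.1 hp
    rw [Prod.dist_eq, max_lt_iff] at hpd
    obtain ⟨hd1, hd2⟩ := hpd
    obtain ⟨δ, hδ, hδ'⟩ := Metric.continuousWithinAt_iff.1 (hφc θ' hθ'G) (ε / 2) (by positivity)
    obtain ⟨x, hx, hxd⟩ := hGG'.exists_dist_lt θ' (lt_min hδ (half_pos hε))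
    rw [dist_comm] at hxd
    have hxδ : dist x θ' < δ := lt_of_lt_of_le hxd (min_le_left _ _)
    have hxε : dist x θ' < ε / 2 := lt_of_lt_of_le hxd (min_le_right _ _)
    have hφx : dist (φ x) (φ θ') < ε / 2 := hδ' hx.1 hxδ
    refine ⟨x, hx, ?_, ?_⟩
    · calc dist x θ ≤ dist x θ' + dist θ' θ := dist_triangle _ _ _
        _ < ε / 2 + ε / 2 := by
            have : dist θ' θ < ε / 2 := by rwa [dist_comm] at hd1
            linarith
        _ = ε := by ring
    · rw [Real.dist_eq] at hφx hd2
      calc |φ x - y| ≤ |φ x - φ θ'| + |φ θ' - y| := abs_sub_le _ _ _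
        _ < ε / 2 + ε / 2 := by
            have : |φ θ' - y| < ε / 2 := by rwa [abs_sub_comm] at hd2
            linarith
        _ = ε := by ring
  have key' : ∀ n : ℕ, ∃ x, x ∈ G ∩ G' ∧ dist x θ < 1 / (n + 1) ∧ |φ x - y| < 1 / (n + 1) :=
    fun n => key _ (by positivity)
  choose t ht htd htv using key'
  obtain ⟨y', hy'I, σ, hσ, hconv⟩ :=
    isCompact_Icc.tendsto_subseq (fun n => hφ'I (t n) (ht n).2)
  have hmono : ∀ n : ℕ, (1 : ℝ) / (σ n + 1) ≤ 1 / (n + 1) := by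
    intro n
    apply one_div_le_one_div_of_le (by positivity)
    have : (n : ℝ) ≤ σ n := by exact_mod_cast hσ.le_apply
    linarith
  have htθ : Tendsto (fun n => t (σ n)) atTop (𝓝 θ) := by
    rw [tendsto_iff_dist_tendsto_zero]
    refine squeeze_zero (fun n => dist_nonneg) (fun n => ?_)
      tendsto_one_div_add_atTop_nhds_zero_nat
    exact le_trans (htd (σ n)).le (hmono n)
  refine ⟨y', ?_, hy'I, ?_⟩
  · refine mem_closure_of_tendsto (htθ.prodMk_nhds hconv)
      (Eventually.of_forall fun n => ?_)
    exact graphOn_mem.2 ⟨t (σ n), (ht (σ n)).2, rfl⟩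
  · have hb : ∀ n : ℕ, |y - φ' (t (σ n))| ≤ d + 1 / (n + 1) := by
      intro n
      have h1 : |y - φ (t (σ n))| ≤ 1 / (n + 1) := by
        rw [abs_sub_comm]
        exact le_trans (htv (σ n)).le (hmono n)
      have h2 : |φ (t (σ n)) - φ' (t (σ n))| ≤ d := hd _ (ht (σ n))
      calc |y - φ' (t (σ n))| ≤ |y - φ (t (σ n))| + |φ (t (σ n)) - φ' (t (σ n))| :=
            abs_sub_le _ _ _
        _ ≤ d + 1 / (n + 1) := by linarith
    have hlim1 : Tendsto (fun n => |y - φ' (t (σ n))|) atTop (𝓝 |y - y'|) := by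
      have hc : Continuous fun z : ℝ => |y - z| := (continuous_const.sub continuous_id).abs
      exact (hc.tendsto y').comp hconv
    have hlim2 : Tendsto (fun n : ℕ => d + 1 / ((n : ℝ) + 1)) atTop (𝓝 d) := by
      simpa using (tendsto_const_nhds : Tendsto (fun _ : ℕ => d) atTop (𝓝 d)).add tendsto_one_div_add_atTop_nhds_zero_nat
    exact le_of_tendsto_of_tendsto' hlim1 hlim2 hb

/-- For two pseudo-curves `PC, PC'`, the Hausdorff distance
`H(PC, PC')` is bounded by the supremum of the fiberwise Hausdorff distances, and this
supremum equals the supremum pseudo-distance `d∞` of the generators. -/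
theorem statement12 (a b : ℝ) (hab : a ≤ b)
    (G G' : Set UnitAddCircle)
    (hG : G ∈ residual UnitAddCircle) (hG' : G' ∈ residual UnitAddCircle)
    (φ φ' : UnitAddCircle → ℝ)
    (hφc : ContinuousOn φ G) (hφ'c : ContinuousOn φ' G')
    (hφI : ∀ θ ∈ G, φ θ ∈ Icc a b) (hφ'I : ∀ θ ∈ G', φ' θ ∈ Icc a b) :
    hausdorffDist (closure (graphOn G φ)) (closure (graphOn G' φ')) ≤
      sSup (Set.range fun θ : UnitAddCircle =>
        hausdorffDist (closure (graphOn G φ) ∩ (({θ} : Set UnitAddCircle) ×ˢ Icc a b))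
          (closure (graphOn G' φ') ∩ (({θ} : Set UnitAddCircle) ×ˢ Icc a b))) ∧
    sSup (Set.range fun θ : UnitAddCircle =>
        hausdorffDist (closure (graphOn G φ) ∩ (({θ} : Set UnitAddCircle) ×ˢ Icc a b))
          (closure (graphOn G' φ') ∩ (({θ} : Set UnitAddCircle) ×ˢ Icc a b)))
      = sSup ((fun θ => |φ θ - φ' θ|) '' (G ∩ G')) := by
  have hGG'mem : G ∩ G' ∈ residual UnitAddCircle := Filter.inter_mem hG hG'
  have hdense : Dense (G ∩ G') := dense_of_mem_residual hGG'mem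
  have hdense' : Dense (G' ∩ G) := by rwa [Set.inter_comm]
  have hne : (G ∩ G').Nonempty := hdense.nonempty
  set d := sSup ((fun θ => |φ θ - φ' θ|) '' (G ∩ G')) with hd_def
  have himne : ((fun θ => |φ θ - φ' θ|) '' (G ∩ G')).Nonempty := hne.image _
  have hbdd : BddAbove ((fun θ => |φ θ - φ' θ|) '' (G ∩ G')) := by
    refine ⟨b - a, ?_⟩
    rintro r ⟨θ, hθ, rfl⟩
    have h1 := hφI θ hθ.1
    have h2 := hφ'I θ hθ.2
    rw [abs_sub_le_iff]
    constructor
    · linarith [h1.2, h2.1]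
    · linarith [h1.1, h2.2]
  have hdle : ∀ θ ∈ G ∩ G', |φ θ - φ' θ| ≤ d := fun θ hθ => le_csSup hbdd ⟨θ, hθ, rfl⟩
  have hd0 : 0 ≤ d := le_trans (abs_nonneg _) (hdle hne.choose hne.choose_spec)
  have hdle' : ∀ θ ∈ G' ∩ G, |φ' θ - φ θ| ≤ d := by
    intro θ hθ
    rw [abs_sub_comm]
    exact hdle θ ⟨hθ.2, hθ.1⟩
  -- the fiberwise Hausdorff distance is bounded by `d`, for every fiber
  have fiberle : ∀ θ : UnitAddCircle,
      hausdorffDist (closure (graphOn G φ) ∩ (({θ} : Set UnitAddCircle) ×ˢ Icc a b))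
        (closure (graphOn G' φ') ∩ (({θ} : Set UnitAddCircle) ×ˢ Icc a b)) ≤ d := by
    intro θ
    apply hausdorffDist_le_of_mem_dist hd0
    · rintro ⟨θ₁, y⟩ ⟨hmem, hθ₁, hyI⟩
      rcases mem_singleton_iff.1 hθ₁ with rfl
      obtain ⟨y', hy'cl, hy'I, hyd⟩ := fiber_approx hdense hφc hφ'I hdle hmem
      refine ⟨(θ₁, y'), ⟨hy'cl, rfl, hy'I⟩, ?_⟩
      rw [Prod.dist_eq]
      simp only [dist_self]
      rw [max_eq_right dist_nonneg, Real.dist_eq]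
      exact hyd
    · rintro ⟨θ₁, y⟩ ⟨hmem, hθ₁, hyI⟩
      rcases mem_singleton_iff.1 hθ₁ with rfl
      obtain ⟨y', hy'cl, hy'I, hyd⟩ := fiber_approx hdense' hφ'c hφI hdle' hmem
      refine ⟨(θ₁, y'), ⟨hy'cl, rfl, hy'I⟩, ?_⟩
      rw [Prod.dist_eq]
      simp only [dist_self]
      rw [max_eq_right dist_nonneg, Real.dist_eq]
      exact hyd
  have hsuple : sSup (Set.range fun θ : UnitAddCircle =>
      hausdorffDist (closure (graphOn G φ) ∩ (({θ} : Set UnitAddCircle) ×ˢ Icc a b))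
        (closure (graphOn G' φ') ∩ (({θ} : Set UnitAddCircle) ×ˢ Icc a b))) ≤ d := by
    apply csSup_le (range_nonempty _)
    rintro r ⟨θ, rfl⟩
    exact fiberle θ
  have hrangebdd : BddAbove (Set.range fun θ : UnitAddCircle =>
      hausdorffDist (closure (graphOn G φ) ∩ (({θ} : Set UnitAddCircle) ×ˢ Icc a b))
        (closure (graphOn G' φ') ∩ (({θ} : Set UnitAddCircle) ×ˢ Icc a b))) := by
    refine ⟨d, ?_⟩
    rintro r ⟨θ, rfl⟩
    exact fiberle θ
  have hdlesup : d ≤ sSup (Set.range fun θ : UnitAddCircle =>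
      hausdorffDist (closure (graphOn G φ) ∩ (({θ} : Set UnitAddCircle) ×ˢ Icc a b))
        (closure (graphOn G' φ') ∩ (({θ} : Set UnitAddCircle) ×ˢ Icc a b))) := by
    apply csSup_le himne
    rintro r ⟨θ₀, hθ₀, rfl⟩
    refine le_trans ?_ (le_csSup hrangebdd ⟨θ₀, rfl⟩)
    -- over `θ₀ ∈ G ∩ G'`, both fibers are singletons
    have hfib : closure (graphOn G φ) ∩ (({θ₀} : Set UnitAddCircle) ×ˢ Icc a b)
        = {(θ₀, φ θ₀)} := by
      apply Subset.antisymm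
      · rintro ⟨θ₁, y⟩ ⟨hmem, hθ₁, hyI⟩
        rcases mem_singleton_iff.1 hθ₁ with rfl
        have := fiber_eq hφc hθ₀.1 hmem
        simp [this]
      · rintro p hp
        rcases mem_singleton_iff.1 hp with rfl
        exact ⟨subset_closure ⟨θ₀, hθ₀.1, rfl⟩, rfl, hφI θ₀ hθ₀.1⟩
    have hfib' : closure (graphOn G' φ') ∩ (({θ₀} : Set UnitAddCircle) ×ˢ Icc a b)
        = {(θ₀, φ' θ₀)} := by
      apply Subset.antisymm
      · rintro ⟨θ₁, y⟩ ⟨hmem, hθ₁, hyI⟩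
        rcases mem_singleton_iff.1 hθ₁ with rfl
        have := fiber_eq hφ'c hθ₀.2 hmem
        simp [this]
      · rintro p hp
        rcases mem_singleton_iff.1 hp with rfl
        exact ⟨subset_closure ⟨θ₀, hθ₀.2, rfl⟩, rfl, hφ'I θ₀ hθ₀.2⟩
    simp only [hfib, hfib']
    have fin : EMetric.hausdorffEdist ({(θ₀, φ θ₀)} : Set (UnitAddCircle × ℝ))
        {(θ₀, φ' θ₀)} ≠ ⊤ :=
      hausdorffEdist_ne_top_of_nonempty_of_bounded (singleton_nonempty _)
        (singleton_nonempty _) Bornology.isBounded_singleton Bornology.isBounded_singleton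
    have h := infDist_le_hausdorffDist_of_mem (mem_singleton ((θ₀, φ θ₀))) fin
    rw [infDist_singleton] at h
    have hdist : dist ((θ₀, φ θ₀) : UnitAddCircle × ℝ) (θ₀, φ' θ₀) = |φ θ₀ - φ' θ₀| := by
      rw [Prod.dist_eq]
      simp only [dist_self]
      rw [max_eq_right dist_nonneg, Real.dist_eq]
    rwa [hdist] at h
  refine ⟨?_, le_antisymm hsuple hdlesup⟩
  refine le_trans ?_ hdlesup
  apply hausdorffDist_le_of_mem_dist hd0
  · rintro ⟨θ₁, y⟩ hmem
    obtain ⟨y', hy'cl, hy'I, hyd⟩ := fiber_approx hdense hφc hφ'I hdle hmem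
    refine ⟨(θ₁, y'), hy'cl, ?_⟩
    rw [Prod.dist_eq]
    simp only [dist_self]
    rw [max_eq_right dist_nonneg, Real.dist_eq]
    exact hyd
  · rintro ⟨θ₁, y⟩ hmem
    obtain ⟨y', hy'cl, hy'I, hyd⟩ := fiber_approx hdense' hφ'c hφI hdle' hmem
    refine ⟨(θ₁, y'), hy'cl, ?_⟩
    rw [Prod.dist_eq]
    simp only [dist_self]
    rw [max_eq_right dist_nonneg, Real.dist_eq]
    exact hyd
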